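/- Let A be a 6-by-6 reciprocal matrix. Then for all θ, λ ∈ ℝ, writing ρ = cos²θ: det(Re(e^{iθ}A) − λI₆) = λ⁶ − (ξ₁ + ξ₂ + ξ₃ + ξ₄ + ξ₅ + 5ρ)λ⁴ + [ (ξ₁ξ₃ + ξ₁ξ₄ + ξ₁ξ₅ + ξ₂ξ₄ + ξ₂ξ₅ + ξ₃ξ₅) + (3(ξ₁ + ξ₅) + 2(ξ₂ + ξ₃ + ξ₄))ρ + 6ρ² ]λ² − (ξ₁ + ρ)(ξ₃ + ρ)(ξ₅ + ρ). -/

import Mathlib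

set_option maxRecDepth 8000
set_option maxHeartbeats 4000000

open Matrix Polynomial

/-- A tridiagonal complex matrix with zero main diagonal whose symmetric
off-diagonal entries have pairwise products equal to one. -/
def IsReciprocal {n : ℕ} (A : Matrix (Fin n) (Fin n) ℂ) : Prop :=
  (∀ i j : Fin n, ((i : ℤ) - (j : ℤ)) ^ 2 ≠ 1 → A i j = 0) ∧
  ∀ i j : Fin n, (j : ℕ) = (i : ℕ) + 1 → A i j * A j i = 1

/-- The Hermitian matrix `Re (e^{iθ} A) = (e^{iθ}A + (e^{iθ}A)*)/2`. -/
noncomputable def RePart {n : ℕ} (θ : ℝ) (A : Matrix (Fin n) (Fin n) ℂ) :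
    Matrix (Fin n) (Fin n) ℂ :=
  (2 : ℂ)⁻¹ • (Complex.exp (θ * Complex.I) • A + (Complex.exp (θ * Complex.I) • A)ᴴ)

lemma det_tridiag_six (d c0 c1 c2 c3 c4 e0 e1 e2 e3 e4 : ℂ) :
    (Matrix.of ![![d,c0,0,0,0,0], ![e0,d,c1,0,0,0], ![0,e1,d,c2,0,0],
      ![0,0,e2,d,c3,0], ![0,0,0,e3,d,c4], ![0,0,0,0,e4,d]]).det
    = d^6 - d^4*(c0*e0 + c1*e1 + c2*e2 + c3*e3 + c4*e4)
      + d^2*(c0*e0*(c2*e2) + c0*e0*(c3*e3) + c0*e0*(c4*e4) + c1*e1*(c3*e3)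
        + c1*e1*(c4*e4) + c2*e2*(c4*e4))
      - c0*e0*(c2*e2)*(c4*e4) := by
  simp [Matrix.det_succ_row_zero, Fin.sum_univ_succ, Fin.succAbove]
  ring

lemma cons_val_five {m : ℕ} {α : Type*} (x : α) (u : Fin (m + 5) → α) :
    Matrix.vecCons x u 5 =
      Matrix.vecHead (Matrix.vecTail (Matrix.vecTail (Matrix.vecTail (Matrix.vecTail u)))) :=
  rfl

lemma key_prod (θ : ℝ) (a b : ℂ) (hab : a * b = 1) :
    ((2:ℂ)⁻¹ * (Complex.exp (θ * Complex.I) * a + (starRingEnd ℂ) (Complex.exp (θ * Complex.I) * b))) *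
    ((2:ℂ)⁻¹ * (Complex.exp (θ * Complex.I) * b + (starRingEnd ℂ) (Complex.exp (θ * Complex.I) * a))) =
    (((‖a‖ - ‖b‖) ^ 2 / 4 + Real.cos θ ^ 2 : ℝ) : ℂ) := by
  have hE : Complex.exp (θ * Complex.I) = (Real.cos θ : ℂ) + (Real.sin θ : ℂ) * Complex.I := by
    rw [Complex.exp_mul_I, Complex.ofReal_cos, Complex.ofReal_sin]
  have hAB : (starRingEnd ℂ) a * (starRingEnd ℂ) b = 1 := by
    rw [← _root_.map_mul, hab, _root_.map_one]
  have haA : a * (starRingEnd ℂ) a = ((‖a‖ : ℂ)) ^ 2 := by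
    rw [Complex.mul_conj]; norm_cast; rw [Complex.sq_norm]
  have hbB : b * (starRingEnd ℂ) b = ((‖b‖ : ℂ)) ^ 2 := by
    rw [Complex.mul_conj]; norm_cast; rw [Complex.sq_norm]
  have hpq : (‖a‖ : ℂ) * (‖b‖ : ℂ) = 1 := by
    norm_cast; rw [← norm_mul, hab]; exact norm_one
  have hs : (Real.sin θ : ℂ) ^ 2 = 1 - (Real.cos θ : ℂ) ^ 2 := by
    norm_cast; rw [Real.sin_sq]
  have hI : Complex.I ^ 2 = -1 := Complex.I_sq
  rw [hE]
  simp only [map_add, _root_.map_mul, Complex.conj_ofReal, Complex.conj_I,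
    Complex.ofReal_add, Complex.ofReal_div, Complex.ofReal_pow, Complex.ofReal_sub,
    Complex.ofReal_ofNat]
  set c := (Real.cos θ : ℂ)
  set s := (Real.sin θ : ℂ)
  set p := (‖a‖ : ℂ)
  set q := (‖b‖ : ℂ)
  linear_combination ((c + s*Complex.I)^2/4) * hab + ((c - s*Complex.I)^2/4) * hAB
    + ((c^2 - s^2*Complex.I^2)/4) * haA + ((c^2 - s^2*Complex.I^2)/4) * hbB
    + (s^2*(2 - p^2 - q^2)/4) * hI + ((p^2 + q^2 - 2)/4) * hs + (1/2) * hpq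

/-- Kippenhahn polynomial of a 6-by-6 reciprocal matrix. -/
theorem kippenhahn_poly_six (A : Matrix (Fin 6) (Fin 6) ℂ) (hA : IsReciprocal A)
    (ξ₁ ξ₂ ξ₃ ξ₄ ξ₅ : ℝ)
    (h1 : ξ₁ = (‖A 0 1‖ - ‖A 1 0‖) ^ 2 / 4)
    (h2 : ξ₂ = (‖A 1 2‖ - ‖A 2 1‖) ^ 2 / 4)
    (h3 : ξ₃ = (‖A 2 3‖ - ‖A 3 2‖) ^ 2 / 4)
    (h4 : ξ₄ = (‖A 3 4‖ - ‖A 4 3‖) ^ 2 / 4)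
    (h5 : ξ₅ = (‖A 4 5‖ - ‖A 5 4‖) ^ 2 / 4) :
    ∀ θ lam : ℝ,
      (RePart θ A - (lam : ℂ) • 1).det =
        ((lam ^ 6 - (ξ₁ + ξ₂ + ξ₃ + ξ₄ + ξ₅ + 5 * Real.cos θ ^ 2) * lam ^ 4
            + ((ξ₁ * ξ₃ + ξ₁ * ξ₄ + ξ₁ * ξ₅ + ξ₂ * ξ₄ + ξ₂ * ξ₅ + ξ₃ * ξ₅)
              + (3 * (ξ₁ + ξ₅) + 2 * (ξ₂ + ξ₃ + ξ₄)) * Real.cos θ ^ 2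
              + 6 * Real.cos θ ^ 2 * Real.cos θ ^ 2) * lam ^ 2
            - (ξ₁ + Real.cos θ ^ 2) * (ξ₃ + Real.cos θ ^ 2) * (ξ₅ + Real.cos θ ^ 2) : ℝ) : ℂ) := by
  obtain ⟨hz, ho⟩ := hA
  intro θ lam
  have z00 : A 0 0 = 0 := hz 0 0 (by decide)
  have z02 : A 0 2 = 0 := hz 0 2 (by decide)
  have z03 : A 0 3 = 0 := hz 0 3 (by decide)
  have z04 : A 0 4 = 0 := hz 0 4 (by decide)
  have z05 : A 0 5 = 0 := hz 0 5 (by decide)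
  have z11 : A 1 1 = 0 := hz 1 1 (by decide)
  have z13 : A 1 3 = 0 := hz 1 3 (by decide)
  have z14 : A 1 4 = 0 := hz 1 4 (by decide)
  have z15 : A 1 5 = 0 := hz 1 5 (by decide)
  have z20 : A 2 0 = 0 := hz 2 0 (by decide)
  have z22 : A 2 2 = 0 := hz 2 2 (by decide)
  have z24 : A 2 4 = 0 := hz 2 4 (by decide)
  have z25 : A 2 5 = 0 := hz 2 5 (by decide)
  have z30 : A 3 0 = 0 := hz 3 0 (by decide)
  have z31 : A 3 1 = 0 := hz 3 1 (by decide)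
  have z33 : A 3 3 = 0 := hz 3 3 (by decide)
  have z35 : A 3 5 = 0 := hz 3 5 (by decide)
  have z40 : A 4 0 = 0 := hz 4 0 (by decide)
  have z41 : A 4 1 = 0 := hz 4 1 (by decide)
  have z42 : A 4 2 = 0 := hz 4 2 (by decide)
  have z44 : A 4 4 = 0 := hz 4 4 (by decide)
  have z50 : A 5 0 = 0 := hz 5 0 (by decide)
  have z51 : A 5 1 = 0 := hz 5 1 (by decide)
  have z52 : A 5 2 = 0 := hz 5 2 (by decide)
  have z53 : A 5 3 = 0 := hz 5 3 (by decide)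
  have z55 : A 5 5 = 0 := hz 5 5 (by decide)
  set f : Fin 6 → Fin 6 → ℂ := fun i j =>
    (2:ℂ)⁻¹ * (Complex.exp (θ * Complex.I) * A i j
      + (starRingEnd ℂ) (Complex.exp (θ * Complex.I) * A j i)) with hf
  have hM : RePart θ A - (lam : ℂ) • 1 =
      Matrix.of ![![-(lam:ℂ), f 0 1, 0, 0, 0, 0],
        ![f 1 0, -(lam:ℂ), f 1 2, 0, 0, 0],
        ![0, f 2 1, -(lam:ℂ), f 2 3, 0, 0],
        ![0, 0, f 3 2, -(lam:ℂ), f 3 4, 0],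
        ![0, 0, 0, f 4 3, -(lam:ℂ), f 4 5],
        ![0, 0, 0, 0, f 5 4, -(lam:ℂ)]] := by
    ext i j
    fin_cases i <;> fin_cases j <;>
      simp [hf, RePart, Matrix.conjTranspose_apply, Matrix.one_apply, Matrix.smul_apply,
        Matrix.add_apply, Matrix.sub_apply, smul_eq_mul, _root_.map_mul, Matrix.of_apply,
        Matrix.cons_val_zero, Matrix.cons_val_one, Matrix.cons_val_two, Matrix.cons_val_three,
        Matrix.cons_val_four, cons_val_five, Matrix.head_cons, Matrix.tail_cons,
        z00, z02, z03, z04, z05, z11, z13, z14, z15, z20, z22, z24, z25, z30, z31, z33,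
        z35, z40, z41, z42, z44, z50, z51, z52, z53, z55] <;>
      first
        | rfl
        | ring
  rw [hM, det_tridiag_six]
  have p1 : f 0 1 * f 1 0 = ((ξ₁ + Real.cos θ ^ 2 : ℝ) : ℂ) := by
    rw [hf, h1]; exact key_prod θ (A 0 1) (A 1 0) (ho 0 1 (by decide))
  have p2 : f 1 2 * f 2 1 = ((ξ₂ + Real.cos θ ^ 2 : ℝ) : ℂ) := by
    rw [hf, h2]; exact key_prod θ (A 1 2) (A 2 1) (ho 1 2 (by decide))
  have p3 : f 2 3 * f 3 2 = ((ξ₃ + Real.cos θ ^ 2 : ℝ) : ℂ) := by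
    rw [hf, h3]; exact key_prod θ (A 2 3) (A 3 2) (ho 2 3 (by decide))
  have p4 : f 3 4 * f 4 3 = ((ξ₄ + Real.cos θ ^ 2 : ℝ) : ℂ) := by
    rw [hf, h4]; exact key_prod θ (A 3 4) (A 4 3) (ho 3 4 (by decide))
  have p5 : f 4 5 * f 5 4 = ((ξ₅ + Real.cos θ ^ 2 : ℝ) : ℂ) := by
    rw [hf, h5]; exact key_prod θ (A 4 5) (A 5 4) (ho 4 5 (by decide))
  rw [p1, p2, p3, p4, p5]
  push_cast
  ring
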